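/- Let q be a prime power and B ⊂ P² the image of the map Φ(s : t) = (s^{q+1} : s^q t + s t^q : t^{q+1}) defined over F_q. Then the number of F_q-rational points of B equals q + 1 + q(q-1)/2. -/

import Mathlib

open Projectivization Polynomial Finset

section BH

def Phi (q : ℕ) {K : Type*} [Field K] (s t : K) : Fin 3 → K :=
  ![s ^ (q + 1), s ^ q * t + s * t ^ q, t ^ (q + 1)]

variable {q : ℕ} {K : Type*} [Field K]

lemma phi_eq_zero_iff (s t : K) : Phi q s t = 0 ↔ s = 0 ∧ t = 0 := by
  constructor
  · intro h
    have h0 := congrFun h 0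
    have h2 := congrFun h 2
    simp [Phi, pow_eq_zero_iff] at h0 h2
    exact ⟨h0, h2⟩
  · rintro ⟨rfl, rfl⟩
    funext i
    fin_cases i <;> simp [Phi, zero_pow]

open scoped Classical in
noncomputable def fMap (q : ℕ) (K : Type*) [Field K] :
    K × K → Projectivization K (Fin 3 → K) := fun p =>
  if h : Phi q p.1 p.2 ≠ 0 then Projectivization.mk K _ h
  else Projectivization.mk K ![1, 0, 0] (by
    intro h'
    have h0 := congrFun h' 0
    simp at h0)

open scoped Classical in
lemma fMap_eq {p : K × K} (h : Phi q p.1 p.2 ≠ 0) :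
    fMap q K p = Projectivization.mk K (Phi q p.1 p.2) h := by
  unfold fMap
  exact dif_pos h

lemma phi_smul (c s t : K) : Phi q (c * s) (c * t) = c ^ (q + 1) • Phi q s t := by
  funext i
  fin_cases i <;> (simp [Phi, mul_pow]; try ring)

lemma fMap_smul {c : K} (hc : c ≠ 0) {s t : K} (h : ¬(s = 0 ∧ t = 0)) :
    fMap q K (c * s, c * t) = fMap q K (s, t) := by
  have h1 : Phi q s t ≠ 0 := fun h' => h ((phi_eq_zero_iff s t).1 h')
  have h2 : Phi q (c * s) (c * t) ≠ 0 := fun h' => by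
    obtain ⟨hs, ht⟩ := (phi_eq_zero_iff _ _).1 h'
    exact h ⟨(mul_eq_zero.1 hs).resolve_left hc, (mul_eq_zero.1 ht).resolve_left hc⟩
  rw [fMap_eq (p := (c * s, c * t)) h2, fMap_eq (p := (s, t)) h1]
  exact (mk_eq_mk_iff' K _ _ _ _).2 ⟨c ^ (q + 1), (phi_smul c s t).symm⟩

lemma phi_frob (hpow : ∀ x : K, x ^ (q * q) = x) (s t : K) :
    Phi q (s ^ q) (t ^ q) = Phi q s t := by
  have key : ∀ x : K, (x ^ q) ^ (q + 1) = x ^ (q + 1) := fun x => by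
    rw [← pow_mul, show q * (q + 1) = q * q + q by ring, pow_add, hpow, ← pow_succ']
  have key2 : (s ^ q) ^ q * t ^ q + s ^ q * (t ^ q) ^ q = s ^ q * t + s * t ^ q := by
    rw [← pow_mul, ← pow_mul, hpow, hpow]; ring
  funext i
  fin_cases i <;> simp [Phi, key, key2]

lemma fMap_frob (hpow : ∀ x : K, x ^ (q * q) = x) (s t : K) :
    fMap q K (s ^ q, t ^ q) = fMap q K (s, t) := by
  by_cases h : Phi q s t ≠ 0
  · have h' : Phi q (s ^ q) (t ^ q) ≠ 0 := by rw [phi_frob hpow]; exact h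
    rw [fMap_eq (p := (s ^ q, t ^ q)) h', fMap_eq (p := (s, t)) h]
    exact (mk_eq_mk_iff' K _ _ _ _).2 ⟨1, by rw [one_smul, phi_frob hpow]⟩
  · unfold fMap
    rw [dif_neg (by rw [phi_frob hpow]; exact h), dif_neg h]

lemma frob_inj' (hpow : ∀ x : K, x ^ (q * q) = x) {x y : K} (h : x ^ q = y ^ q) : x = y := by
  have := hpow x
  rw [pow_mul, h, ← pow_mul, hpow y] at this
  exact this.symm

lemma colinear_decomp {s t u v : K} (h : u * t = v * s) (hst : ¬(s = 0 ∧ t = 0))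
    (huv : ¬(u = 0 ∧ v = 0)) : ∃ c : K, c ≠ 0 ∧ u = c * s ∧ v = c * t := by
  by_cases hs : s = 0
  · subst hs
    have ht : t ≠ 0 := fun h' => hst ⟨rfl, h'⟩
    rw [mul_zero] at h
    have hu : u = 0 := (mul_eq_zero.1 h).resolve_right ht
    have hv : v ≠ 0 := fun h' => huv ⟨hu, h'⟩
    exact ⟨v * t⁻¹, mul_ne_zero hv (inv_ne_zero ht), by simp [hu], by field_simp⟩
  · have hu : u ≠ 0 := by
      intro h'
      subst h'
      rw [zero_mul] at h
      rcases mul_eq_zero.1 h.symm with h'' | h''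
      · exact huv ⟨rfl, h''⟩
      · exact hs h''
    refine ⟨u * s⁻¹, mul_ne_zero hu (inv_ne_zero hs), by field_simp, ?_⟩
    field_simp
    linear_combination -h

lemma sigfix_smul {c s t : K} (hfix : s ^ q * t = s * t ^ q) :
    (c * s) ^ q * (c * t) = (c * s) * (c * t) ^ q := by
  rw [mul_pow, mul_pow]
  linear_combination (c ^ q * c) * hfix

lemma sigfix_unsmul {c s t : K} (hc : c ≠ 0)
    (h : (c * s) ^ q * (c * t) = (c * s) * (c * t) ^ q) : s ^ q * t = s * t ^ q := by
  rw [mul_pow, mul_pow] at h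
  refine mul_left_cancel₀ (mul_ne_zero (pow_ne_zero q hc) hc) ?_
  linear_combination h

lemma sigfix_frob {s t : K} (hfix : s ^ q * t = s * t ^ q) :
    (s ^ q) ^ q * t ^ q = s ^ q * (t ^ q) ^ q := by
  rw [← mul_pow, ← mul_pow, hfix]

lemma sigfix_unfrob (hpow : ∀ x : K, x ^ (q * q) = x) {s t : K}
    (hfix : (s ^ q) ^ q * t ^ q = s ^ q * (t ^ q) ^ q) : s ^ q * t = s * t ^ q :=
  frob_inj' hpow (by rw [mul_pow, mul_pow]; exact hfix)

lemma phi_key (hpow : ∀ x : K, x ^ (q * q) = x) {s t u v : K}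
    (hst : Phi q s t ≠ 0) (huv : Phi q u v ≠ 0)
    (heq : Projectivization.mk K (Phi q u v) huv = Projectivization.mk K (Phi q s t) hst) :
    u * t = v * s ∨ u * t ^ q = v * s ^ q := by
  rw [mk_eq_mk_iff] at heq
  obtain ⟨a, ha⟩ := heq
  have h0 := congrFun ha 0
  have h1 := congrFun ha 1
  have h2 := congrFun ha 2
  simp only [Phi, Pi.smul_apply, Matrix.cons_val_zero, Matrix.cons_val_one, Matrix.head_cons,
    Matrix.cons_val_two, Matrix.tail_cons, Units.smul_def, smul_eq_mul] at h0 h1 h2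
  have hprod : (u * t - v * s) * (u ^ q * t - v ^ q * s) = 0 := by
    linear_combination -t ^ 2 * h0 + s * t * h1 - s ^ 2 * h2
  rcases mul_eq_zero.1 hprod with h | h
  · exact Or.inl (sub_eq_zero.1 h)
  · right
    have h' : u ^ q * t = v ^ q * s := sub_eq_zero.1 h
    refine frob_inj' hpow ?_
    rw [mul_pow, mul_pow, ← pow_mul, ← pow_mul, hpow, hpow]
    exact h'

lemma case2_to_case1 (hq0 : q ≠ 0) {s₀ t₀ u v : K} (h0 : ¬(s₀ = 0 ∧ t₀ = 0))
    (hfix : s₀ ^ q * t₀ = s₀ * t₀ ^ q) (h : u * t₀ ^ q = v * s₀ ^ q) : u * t₀ = v * s₀ := by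
  by_cases hs : s₀ = 0
  · subst hs
    have ht : t₀ ≠ 0 := fun h' => h0 ⟨rfl, h'⟩
    rw [zero_pow hq0, mul_zero] at h
    have hu : u = 0 := (mul_eq_zero.1 h).resolve_right (pow_ne_zero q ht)
    rw [hu, zero_mul, mul_zero]
  · have key : s₀ ^ q * (u * t₀) = s₀ ^ q * (v * s₀) := by
      linear_combination u * hfix + s₀ * h
    exact mul_left_cancel₀ (pow_ne_zero q hs) key

end BH

section CardFix
variable {K : Type*} [Field K] [Fintype K] [DecidableEq K] {q : ℕ}

lemma card_fix (hq2 : 2 ≤ q) (hK : Fintype.card K = q ^ 2) :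
    #(Finset.univ.filter fun x : K => x ^ q = x) = q := by
  have hq1 : 0 < q - 1 := by omega
  have hdvd : q - 1 ∣ Fintype.card Kˣ := by
    rw [Fintype.card_units, hK]
    exact ⟨q + 1, by zify [show 1 ≤ q by omega, Nat.one_le_pow 2 q (by omega)]; ring⟩
  obtain ⟨ζ, hζ⟩ : ∃ ζ : Kˣ, orderOf ζ = q - 1 := by
    have hcard := IsCyclic.card_orderOf_eq_totient (α := Kˣ) hdvd
    have hpos : 0 < #(Finset.univ.filter fun a : Kˣ => orderOf a = q - 1) := by
      rw [hcard]; exact Nat.totient_pos.2 hq1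
    obtain ⟨a, ha⟩ := Finset.card_pos.1 hpos
    exact ⟨a, (Finset.mem_filter.1 ha).2⟩
  have hprim : IsPrimitiveRoot (ζ : K) (q - 1) := by
    rw [IsPrimitiveRoot.coe_units_iff, ← hζ]
    exact IsPrimitiveRoot.orderOf ζ
  have hroots : (Polynomial.nthRootsFinset (q - 1) (1 : K)).card = q - 1 :=
    hprim.card_nthRootsFinset
  have hset : (Finset.univ.filter fun x : K => x ^ q = x)
      = insert (0 : K) (Polynomial.nthRootsFinset (q - 1) (1 : K)) := by
    ext x
    simp only [Finset.mem_filter, Finset.mem_univ, true_and, Finset.mem_insert,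
      Polynomial.mem_nthRootsFinset hq1]
    constructor
    · intro h
      by_cases hx : x = 0
      · exact Or.inl hx
      · right
        have : x ^ (q - 1) * x = 1 * x := by
          rw [one_mul, ← pow_succ, Nat.sub_add_cancel (by omega)]; exact h
        exact mul_right_cancel₀ hx this
    · rintro (rfl | h)
      · rw [zero_pow (by omega)]
      · calc x ^ q = x ^ (q - 1) * x := by rw [← pow_succ, Nat.sub_add_cancel (by omega)]
          _ = x := by rw [h, one_mul]
  rw [hset, Finset.card_insert_of_notMem, hroots]
  · omega
  · intro h
    have := (Polynomial.mem_nthRootsFinset hq1 _).1 h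
    rw [zero_pow (by omega)] at this
    exact zero_ne_one this

lemma inner_card (hq2 : 2 ≤ q) (hK : Fintype.card K = q ^ 2) (s : K) (hs : s ≠ 0) :
    #(Finset.univ.filter fun t : K => s ^ q * t = s * t ^ q) = q := by
  have himg : (Finset.univ.filter fun t : K => s ^ q * t = s * t ^ q)
      = (Finset.univ.filter fun x : K => x ^ q = x).image (fun x => s * x) := by
    ext t
    simp only [Finset.mem_filter, Finset.mem_univ, true_and, Finset.mem_image]
    constructor
    · intro h
      refine ⟨s⁻¹ * t, ?_, by field_simp⟩
      have hsq : s ^ q ≠ 0 := pow_ne_zero _ hs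
      field_simp
      rw [div_pow, mul_div_assoc', div_eq_iff hsq]
      linear_combination -h
    · rintro ⟨x, hx, rfl⟩
      rw [mul_pow]
      calc s ^ q * (s * x) = s * (s ^ q * x ^ q) := by rw [hx]; ring
        _ = s * (s ^ q * x ^ q) := rfl
  rw [himg, Finset.card_image_of_injective _ (mul_right_injective₀ hs), card_fix hq2 hK]
end CardFix

section FinsetLayer
variable (q : ℕ) (K : Type*) [Field K] [Fintype K] [DecidableEq K]

def Dset : Finset (K × K) := univ.filter fun p => ¬(p.1 = 0 ∧ p.2 = 0)

def D1set : Finset (K × K) :=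
  univ.filter fun p => (p.1 ^ q * p.2 = p.1 * p.2 ^ q) ∧ ¬(p.1 = 0 ∧ p.2 = 0)

open scoped Classical in
noncomputable def fiber (P : Projectivization K (Fin 3 → K)) : Finset (K × K) :=
  (Dset K).filter fun p => fMap q K p = P

variable {q K}

lemma mem_Dset {p : K × K} : p ∈ Dset K ↔ ¬(p.1 = 0 ∧ p.2 = 0) := by simp [Dset]

lemma mem_D1set {p : K × K} :
    p ∈ D1set q K ↔ (p.1 ^ q * p.2 = p.1 * p.2 ^ q) ∧ ¬(p.1 = 0 ∧ p.2 = 0) := by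
  simp [D1set]

open scoped Classical in
lemma mem_fiber {p : K × K} {P : Projectivization K (Fin 3 → K)} :
    p ∈ fiber q K P ↔ ¬(p.1 = 0 ∧ p.2 = 0) ∧ fMap q K p = P := by
  simp [fiber, Dset, Finset.mem_filter]

lemma card_Dset (hK : Fintype.card K = q ^ 2) : #(Dset K) = q ^ 4 - 1 := by
  have : Dset K = (Finset.univ : Finset (K × K)).erase (0, 0) := by
    ext p
    simp only [Dset, Finset.mem_filter, Finset.mem_univ, true_and, Finset.mem_erase]
    constructor
    · intro h
      exact ⟨fun h' => h ⟨congrArg Prod.fst h', congrArg Prod.snd h'⟩, trivial⟩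
    · rintro ⟨h, -⟩
      exact fun ⟨h1, h2⟩ => h (Prod.ext h1 h2)
  rw [this, Finset.card_erase_of_mem (Finset.mem_univ _), Finset.card_univ,
    Fintype.card_prod, hK, ← pow_add]

lemma card_D1set (hq2 : 2 ≤ q) (hK : Fintype.card K = q ^ 2) :
    #(D1set q K) = (q ^ 2 - 1) * (q + 1) := by
  have hq0 : q ≠ 0 := by omega
  have hfull : #(Finset.univ.filter fun p : K × K => p.1 ^ q * p.2 = p.1 * p.2 ^ q)
      = q ^ 2 + (q ^ 2 - 1) * q := by
    rw [Finset.card_eq_sum_card_fiberwise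
      (f := Prod.fst) (t := Finset.univ) (fun x _ => Finset.mem_univ _)]
    have fib : ∀ s : K, ((Finset.univ.filter fun p : K × K =>
        p.1 ^ q * p.2 = p.1 * p.2 ^ q).filter fun p => p.1 = s)
        = (Finset.univ.filter fun t : K => s ^ q * t = s * t ^ q).image (fun t => (s, t)) := by
      intro s
      ext p
      simp only [Finset.mem_filter, Finset.mem_univ, true_and, Finset.mem_image]
      constructor
      · rintro ⟨hc, rfl⟩
        exact ⟨p.2, hc, rfl⟩
      · rintro ⟨t, ht, rfl⟩
        exact ⟨ht, rfl⟩
    have hterm : ∀ s : K, ((Finset.univ.filter fun p : K × K =>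
        p.1 ^ q * p.2 = p.1 * p.2 ^ q).filter fun p => p.1 = s).card
        = if s = 0 then q ^ 2 else q := by
      intro s
      rw [fib s, Finset.card_image_of_injective _ (fun a b h => congrArg Prod.snd h)]
      by_cases hs : s = 0
      · subst hs
        simp [zero_pow hq0, hK]
      · rw [if_neg hs, inner_card hq2 hK s hs]
    rw [Finset.sum_congr rfl (fun s _ => hterm s),
      ← Finset.add_sum_erase _ _ (Finset.mem_univ (0 : K)),
      if_pos rfl, Finset.sum_congr rfl (fun x hx => if_neg (Finset.ne_of_mem_erase hx)),
      Finset.sum_const, smul_eq_mul, Finset.card_erase_of_mem (Finset.mem_univ _),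
      Finset.card_univ, hK]
  have hsub : D1set q K
      = (Finset.univ.filter fun p : K × K => p.1 ^ q * p.2 = p.1 * p.2 ^ q).erase (0, 0) := by
    ext p
    simp only [D1set, Finset.mem_filter, Finset.mem_univ, true_and, Finset.mem_erase]
    constructor
    · rintro ⟨hc, hne⟩
      exact ⟨fun h => hne ⟨congrArg Prod.fst h, congrArg Prod.snd h⟩, hc⟩
    · rintro ⟨hne, hc⟩
      exact ⟨hc, fun ⟨h1, h2⟩ => hne (Prod.ext h1 h2)⟩
  rw [hsub, Finset.card_erase_of_mem, hfull]
  · have h1 : 1 ≤ q ^ 2 := Nat.one_le_pow 2 q (by omega)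
    have h2 : (q ^ 2 - 1) * (q + 1) = (q ^ 2 - 1) * q + (q ^ 2 - 1) := Nat.mul_succ _ _
    omega
  · simp [zero_pow hq0]

lemma scal_inj {s t : K} (h0 : ¬(s = 0 ∧ t = 0)) :
    Function.Injective (fun c : K => (c * s, c * t)) := by
  intro a b hab
  simp only [Prod.mk.injEq] at hab
  by_cases hs : s = 0
  · have ht : t ≠ 0 := fun h' => h0 ⟨hs, h'⟩
    exact mul_right_cancel₀ ht hab.2
  · exact mul_right_cancel₀ hs hab.1

lemma img_card {s t : K} (h0 : ¬(s = 0 ∧ t = 0)) :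
    #((univ.filter fun c : K => c ≠ 0).image (fun c => (c * s, c * t)))
      = Fintype.card K - 1 := by
  rw [Finset.card_image_of_injective _ (scal_inj h0), Finset.filter_ne',
    Finset.card_erase_of_mem (Finset.mem_univ _), Finset.card_univ]

lemma fiber_sig (hpow : ∀ x : K, x ^ (q * q) = x) (hq0 : q ≠ 0) {s₀ t₀ : K}
    (h0 : ¬(s₀ = 0 ∧ t₀ = 0)) (hfix : s₀ ^ q * t₀ = s₀ * t₀ ^ q) :
    fiber q K (fMap q K (s₀, t₀))
      = (univ.filter fun c : K => c ≠ 0).image (fun c => (c * s₀, c * t₀)) := by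
  ext p
  rw [mem_fiber, Finset.mem_image]
  constructor
  · rintro ⟨hp, hfp⟩
    have hv : Phi q p.1 p.2 ≠ 0 := fun h' => hp ((phi_eq_zero_iff _ _).1 h')
    have hv0 : Phi q s₀ t₀ ≠ 0 := fun h' => h0 ((phi_eq_zero_iff _ _).1 h')
    rw [fMap_eq hv, fMap_eq (p := (s₀, t₀)) hv0] at hfp
    have hcol : p.1 * t₀ = p.2 * s₀ := by
      rcases phi_key hpow hv0 hv hfp with h | h
      · exact h
      · exact case2_to_case1 hq0 h0 hfix h
    obtain ⟨c, hc, h1, h2⟩ := colinear_decomp hcol h0 hp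
    exact ⟨c, by simp [hc], Prod.ext h1.symm h2.symm⟩
  · rintro ⟨c, hc, rfl⟩
    simp only [Finset.mem_filter, Finset.mem_univ, true_and] at hc
    refine ⟨?_, fMap_smul hc h0⟩
    rintro ⟨h1, h2⟩
    exact h0 ⟨(mul_eq_zero.1 h1).resolve_left hc, (mul_eq_zero.1 h2).resolve_left hc⟩

lemma fiber_nonsig (hpow : ∀ x : K, x ^ (q * q) = x) (hq0 : q ≠ 0) {s₀ t₀ : K}
    (h0 : ¬(s₀ = 0 ∧ t₀ = 0)) :
    fiber q K (fMap q K (s₀, t₀))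
      = (univ.filter fun c : K => c ≠ 0).image (fun c => (c * s₀, c * t₀))
        ∪ (univ.filter fun c : K => c ≠ 0).image (fun c => (c * s₀ ^ q, c * t₀ ^ q)) := by
  have h0' : ¬(s₀ ^ q = 0 ∧ t₀ ^ q = 0) := by
    rintro ⟨h1, h2⟩
    exact h0 ⟨pow_eq_zero_iff hq0 |>.1 h1, pow_eq_zero_iff hq0 |>.1 h2⟩
  ext p
  rw [mem_fiber, Finset.mem_union, Finset.mem_image, Finset.mem_image]
  constructor
  · rintro ⟨hp, hfp⟩
    have hv : Phi q p.1 p.2 ≠ 0 := fun h' => hp ((phi_eq_zero_iff _ _).1 h')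
    have hv0 : Phi q s₀ t₀ ≠ 0 := fun h' => h0 ((phi_eq_zero_iff _ _).1 h')
    rw [fMap_eq hv, fMap_eq (p := (s₀, t₀)) hv0] at hfp
    rcases phi_key hpow hv0 hv hfp with h | h
    · obtain ⟨c, hc, h1, h2⟩ := colinear_decomp h h0 hp
      exact Or.inl ⟨c, by simp [hc], Prod.ext h1.symm h2.symm⟩
    · obtain ⟨c, hc, h1, h2⟩ := colinear_decomp h h0' hp
      exact Or.inr ⟨c, by simp [hc], Prod.ext h1.symm h2.symm⟩
  · rintro (⟨c, hc, rfl⟩ | ⟨c, hc, rfl⟩) <;>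
      simp only [Finset.mem_filter, Finset.mem_univ, true_and] at hc
    · refine ⟨?_, fMap_smul hc h0⟩
      rintro ⟨h1, h2⟩
      exact h0 ⟨(mul_eq_zero.1 h1).resolve_left hc, (mul_eq_zero.1 h2).resolve_left hc⟩
    · refine ⟨?_, ?_⟩
      · rintro ⟨h1, h2⟩
        exact h0' ⟨(mul_eq_zero.1 h1).resolve_left hc, (mul_eq_zero.1 h2).resolve_left hc⟩
      · rw [fMap_smul hc h0', fMap_frob hpow]

lemma fiber_disj {s₀ t₀ : K} (hnfix : s₀ ^ q * t₀ ≠ s₀ * t₀ ^ q) :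
    Disjoint ((univ.filter fun c : K => c ≠ 0).image (fun c => (c * s₀, c * t₀)))
      ((univ.filter fun c : K => c ≠ 0).image (fun c => (c * s₀ ^ q, c * t₀ ^ q))) := by
  rw [Finset.disjoint_left]
  rintro p hp1 hp2
  rw [Finset.mem_image] at hp1 hp2
  obtain ⟨c, hc, rfl⟩ := hp1
  obtain ⟨c', hc', he⟩ := hp2
  simp only [Finset.mem_filter, Finset.mem_univ, true_and] at hc hc'
  have e1 : c' * s₀ ^ q = c * s₀ := congrArg Prod.fst he
  have e2 : c' * t₀ ^ q = c * t₀ := congrArg Prod.snd he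
  refine hnfix (mul_left_cancel₀ (mul_ne_zero hc hc') ?_)
  linear_combination c * t₀ * e1 - c * s₀ * e2

/-- Members of the fiber of a `σ`-fixed point are `σ`-fixed. -/
lemma fiber_sig_mem (hpow : ∀ x : K, x ^ (q * q) = x) (hq0 : q ≠ 0) {s₀ t₀ : K}
    (h0 : ¬(s₀ = 0 ∧ t₀ = 0)) (hfix : s₀ ^ q * t₀ = s₀ * t₀ ^ q) {p : K × K}
    (hp : p ∈ fiber q K (fMap q K (s₀, t₀))) : p.1 ^ q * p.2 = p.1 * p.2 ^ q := by
  rw [fiber_sig hpow hq0 h0 hfix, Finset.mem_image] at hp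
  obtain ⟨c, hc, rfl⟩ := hp
  exact sigfix_smul hfix

/-- Members of the fiber of a non-`σ`-fixed point are non-`σ`-fixed. -/
lemma fiber_nonsig_mem (hpow : ∀ x : K, x ^ (q * q) = x) (hq0 : q ≠ 0) {s₀ t₀ : K}
    (h0 : ¬(s₀ = 0 ∧ t₀ = 0)) (hnfix : ¬(s₀ ^ q * t₀ = s₀ * t₀ ^ q)) {p : K × K}
    (hp : p ∈ fiber q K (fMap q K (s₀, t₀))) : ¬(p.1 ^ q * p.2 = p.1 * p.2 ^ q) := by
  rw [fiber_nonsig hpow hq0 h0, Finset.mem_union, Finset.mem_image, Finset.mem_image] at hp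
  rcases hp with ⟨c, hc, rfl⟩ | ⟨c, hc, rfl⟩ <;>
    simp only [Finset.mem_filter, Finset.mem_univ, true_and] at hc
  · exact fun h => hnfix (sigfix_unsmul hc h)
  · exact fun h => hnfix (sigfix_unfrob hpow (sigfix_unsmul hc h))

end FinsetLayer

/-- The Ballico-Hefez curve `B`, the image of `Φ(s:t) = (s^{q+1} : s^q t + s t^q : t^{q+1})`,
has exactly `q + 1 + q(q-1)/2` points rational over `F_q`; these are the images of the
points of `P¹(F_{q²})` (here `K` is the field with `q²` elements). -/
theorem stmt_3 (q : ℕ) (hq : IsPrimePow q) (K : Type*) [Field K] [Fintype K]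
    (hK : Fintype.card K = q ^ 2) :
    Set.ncard {P : Projectivization K (Fin 3 → K) | ∃ s t : K,
      ∃ h : (![s ^ (q + 1), s ^ q * t + s * t ^ q, t ^ (q + 1)] : Fin 3 → K) ≠ 0,
      P = Projectivization.mk K ![s ^ (q + 1), s ^ q * t + s * t ^ q, t ^ (q + 1)] h}
      = q + 1 + q * (q - 1) / 2 := by
  classical
  have hq2 : 2 ≤ q := hq.two_le
  have hq0 : q ≠ 0 := by omega
  have hpow : ∀ x : K, x ^ (q * q) = x := fun x => by
    rw [show q * q = q ^ 2 by ring, ← hK]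
    exact FiniteField.pow_card x
  -- identify the set with the image of `Dset` under `fMap`
  have hSet : {P : Projectivization K (Fin 3 → K) | ∃ s t : K,
      ∃ h : (![s ^ (q + 1), s ^ q * t + s * t ^ q, t ^ (q + 1)] : Fin 3 → K) ≠ 0,
      P = Projectivization.mk K ![s ^ (q + 1), s ^ q * t + s * t ^ q, t ^ (q + 1)] h}
      = ↑((Dset K).image (fMap q K)) := by
    ext P
    simp only [Set.mem_setOf_eq, Finset.coe_image, Set.mem_image, Finset.mem_coe]
    constructor
    · rintro ⟨s, t, h, rfl⟩
      have h' : Phi q s t ≠ 0 := h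
      refine ⟨(s, t), ?_, ?_⟩
      · rw [mem_Dset]
        intro h''
        exact h' ((phi_eq_zero_iff s t).2 h'')
      · exact fMap_eq (p := (s, t)) h'
    · rintro ⟨p, hp, rfl⟩
      have h' : Phi q p.1 p.2 ≠ 0 := by
        rw [mem_Dset] at hp
        exact fun h'' => hp ((phi_eq_zero_iff _ _).1 h'')
      exact ⟨p.1, p.2, h', fMap_eq h'⟩
  rw [hSet, Set.ncard_coe_finset]
  -- partition
  have hsub : D1set q K ⊆ Dset K := by
    intro p hp
    rw [mem_D1set] at hp
    exact mem_Dset.2 hp.2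
  set D2 : Finset (K × K) := Dset K \ D1set q K with hD2
  set S1 : Finset (Projectivization K (Fin 3 → K)) := (D1set q K).image (fMap q K) with hS1
  set S2 : Finset (Projectivization K (Fin 3 → K)) := D2.image (fMap q K) with hS2
  have himgsplit : (Dset K).image (fMap q K) = S1 ∪ S2 := by
    rw [hS1, hS2, ← Finset.image_union, Finset.union_sdiff_of_subset hsub]
  -- fibers over S1
  have hfibD1 : ∀ p₀ ∈ D1set q K,
      (D1set q K).filter (fun p => fMap q K p = fMap q K p₀) = fiber q K (fMap q K p₀) := by
    intro p₀ hp₀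
    rw [mem_D1set] at hp₀
    ext p
    rw [Finset.mem_filter, mem_D1set, mem_fiber]
    constructor
    · rintro ⟨⟨-, hne⟩, hf⟩
      exact ⟨hne, hf⟩
    · rintro ⟨hne, hf⟩
      refine ⟨⟨?_, hne⟩, hf⟩
      exact fiber_sig_mem hpow hq0 hp₀.2 hp₀.1 (mem_fiber.2 ⟨hne, hf⟩)
  have hfibD2 : ∀ p₀ ∈ D2,
      D2.filter (fun p => fMap q K p = fMap q K p₀) = fiber q K (fMap q K p₀) := by
    intro p₀ hp₀
    rw [hD2, Finset.mem_sdiff, mem_Dset, mem_D1set] at hp₀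
    obtain ⟨hne₀, hnot⟩ := hp₀
    have hnfix : ¬(p₀.1 ^ q * p₀.2 = p₀.1 * p₀.2 ^ q) := fun h => hnot ⟨h, hne₀⟩
    ext p
    rw [Finset.mem_filter, hD2, Finset.mem_sdiff, mem_Dset, mem_D1set, mem_fiber]
    constructor
    · rintro ⟨⟨hne, -⟩, hf⟩
      exact ⟨hne, hf⟩
    · rintro ⟨hne, hf⟩
      refine ⟨⟨hne, ?_⟩, hf⟩
      rintro ⟨hfix, -⟩
      exact fiber_nonsig_mem hpow hq0 hne₀ hnfix (mem_fiber.2 ⟨hne, hf⟩) hfix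
  -- fiber cardinalities
  have hcard1 : ∀ p₀ ∈ D1set q K, #(fiber q K (fMap q K p₀)) = q ^ 2 - 1 := by
    intro p₀ hp₀
    rw [mem_D1set] at hp₀
    rw [show (p₀ : K × K) = (p₀.1, p₀.2) from rfl, fiber_sig hpow hq0 hp₀.2 hp₀.1,
      img_card hp₀.2, hK]
  have hcard2 : ∀ p₀ ∈ D2, #(fiber q K (fMap q K p₀)) = 2 * (q ^ 2 - 1) := by
    intro p₀ hp₀
    rw [hD2, Finset.mem_sdiff, mem_Dset, mem_D1set] at hp₀
    obtain ⟨hne₀, hnot⟩ := hp₀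
    have hnfix : ¬(p₀.1 ^ q * p₀.2 = p₀.1 * p₀.2 ^ q) := fun h => hnot ⟨h, hne₀⟩
    have h0' : ¬(p₀.1 ^ q = 0 ∧ p₀.2 ^ q = 0) := by
      rintro ⟨h1, h2⟩
      exact hne₀ ⟨pow_eq_zero_iff hq0 |>.1 h1, pow_eq_zero_iff hq0 |>.1 h2⟩
    rw [show (p₀ : K × K) = (p₀.1, p₀.2) from rfl, fiber_nonsig hpow hq0 hne₀,
      Finset.card_union_of_disjoint (fiber_disj hnfix), img_card hne₀, img_card h0', hK]
    omega
  -- sum over fibers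
  have hsum1 : #(D1set q K) = #S1 * (q ^ 2 - 1) := by
    rw [Finset.card_eq_sum_card_fiberwise
      (f := fMap q K) (t := S1) (fun p hp => Finset.mem_image_of_mem _ hp)]
    rw [Finset.sum_congr rfl (fun P hP => ?_), Finset.sum_const, smul_eq_mul]
    rw [hS1, Finset.mem_image] at hP
    obtain ⟨p₀, hp₀, rfl⟩ := hP
    rw [hfibD1 p₀ hp₀, hcard1 p₀ hp₀]
  have hsum2 : #D2 = #S2 * (2 * (q ^ 2 - 1)) := by
    rw [Finset.card_eq_sum_card_fiberwise
      (f := fMap q K) (t := S2) (fun p hp => Finset.mem_image_of_mem _ hp)]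
    rw [Finset.sum_congr rfl (fun P hP => ?_), Finset.sum_const, smul_eq_mul]
    rw [hS2, Finset.mem_image] at hP
    obtain ⟨p₀, hp₀, rfl⟩ := hP
    rw [hfibD2 p₀ hp₀, hcard2 p₀ hp₀]
  -- disjointness of S1 and S2
  have hdisjS : Disjoint S1 S2 := by
    rw [Finset.disjoint_left]
    intro P hP1 hP2
    rw [hS1, Finset.mem_image] at hP1
    rw [hS2, Finset.mem_image] at hP2
    obtain ⟨p₀, hp₀, rfl⟩ := hP1
    obtain ⟨p₁, hp₁, he⟩ := hP2
    rw [mem_D1set] at hp₀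
    rw [hD2, Finset.mem_sdiff, mem_Dset, mem_D1set] at hp₁
    obtain ⟨hne₁, hnot₁⟩ := hp₁
    have : p₁ ∈ fiber q K (fMap q K p₀) := mem_fiber.2 ⟨hne₁, he⟩
    exact hnot₁ ⟨fiber_sig_mem hpow hq0 hp₀.2 hp₀.1 this, hne₁⟩
  -- cardinalities
  have hq4 : 1 ≤ q ^ 2 := Nat.one_le_pow 2 q (by omega)
  have hq4' : 4 ≤ q ^ 2 := by
    calc 4 = 2 * 2 := rfl
    _ ≤ q * q := Nat.mul_le_mul hq2 hq2
    _ = q ^ 2 := (sq q).symm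
  have hDcard : #(Dset K) = q ^ 4 - 1 := card_Dset hK
  have hD1card : #(D1set q K) = (q ^ 2 - 1) * (q + 1) := card_D1set hq2 hK
  have hsplit : #D2 + #(D1set q K) = #(Dset K) := by
    rw [hD2]
    exact Finset.card_sdiff_add_card_eq_card hsub
  have hq41 : 1 ≤ q ^ 4 := Nat.one_le_pow 4 q (by omega)
  have hkey : q ^ 4 - 1 = (q ^ 2 - 1) * (q ^ 2 + 1) := by
    zify [hq4, hq41]
    ring
  have hS1card : #S1 = q + 1 := by
    have h := hsum1.symm.trans hD1card
    rw [mul_comm ((q : ℕ) ^ 2 - 1) (q + 1)] at h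
    exact Nat.eq_of_mul_eq_mul_right (by omega) h
  have e0 : #D2 + (q ^ 2 - 1) * (q + 1) = (q ^ 2 - 1) * (q ^ 2 + 1) := by
    rw [← hD1card, hsplit, hDcard, hkey]
  have hS2eq : (q ^ 2 - 1) * (2 * #S2 + (q + 1)) = (q ^ 2 - 1) * (q ^ 2 + 1) := by
    rw [mul_add, show (q ^ 2 - 1) * (2 * #S2) = #S2 * (2 * (q ^ 2 - 1)) by ring, ← hsum2]
    exact e0
  have hS2' : 2 * #S2 + (q + 1) = q ^ 2 + 1 :=
    Nat.eq_of_mul_eq_mul_left (by omega) hS2eq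
  have hqq : q * (q - 1) + q = q * q := by
    obtain ⟨m, rfl⟩ : ∃ m, q = m + 1 := ⟨q - 1, by omega⟩
    simp [Nat.add_sub_cancel]
    ring
  have hsq : q ^ 2 = q * q := sq q
  rw [himgsplit, Finset.card_union_of_disjoint hdisjS, hS1card]
  omega
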